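/- arXiv:1901.06736 — 3 statements merged into one kernel-verified Lean document; each statement's English description precedes it below -/
import Mathlib

section
/- Let V be a real Banach space, K ⊆ V convex, u ∈ K, T : V → V* hemicontinuous, φ : V → ℝ ∪ {+∞} convex and finite on K, m ∈ V*. If for every w ∈ K and every λ ∈ (0,1), writing u_λ = λw + (1−λ)u, one has ⟨T(u_λ), w−u⟩ + φ(w) − φ(u) ≥ ⟨m, w−u⟩, then ⟨T(u), w−u⟩ + φ(w) − φ(u) ≥ ⟨m, w−u⟩ for all w ∈ K. -/
open NormedSpace

/-- If for every `w ∈ K` and every `λ ∈ (0,1)`, with `u_λ = λ • w + (1-λ) • u`, one has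
`⟨T u_λ, w - u⟩ + φ w - φ u ≥ ⟨m, w - u⟩`, then (by hemicontinuity of `T`)
`⟨T u, w - u⟩ + φ w - φ u ≥ ⟨m, w - u⟩` for all `w ∈ K`. -/
theorem minty_hard_direction_limit
    {V : Type*} [NormedAddCommGroup V] [NormedSpace ℝ V] [CompleteSpace V]
    (K : Set V) (hKconv : Convex ℝ K) (u : V) (hu : u ∈ K)
    (T : V → StrongDual ℝ V)
    (hhemi : ∀ x z w : V, ContinuousOn (fun t : ℝ => T (x + t • z) w) (Set.Icc 0 1))
    (φ : V → EReal) (hnotbot : ∀ x, φ x ≠ ⊥)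
    (hconv : ∀ x y : V, ∀ s t : ℝ, 0 ≤ s → 0 ≤ t → s + t = 1 →
      φ (s • x + t • y) ≤ (s : EReal) * φ x + (t : EReal) * φ y)
    (hfin : ∀ x ∈ K, φ x ≠ ⊤)
    (m : StrongDual ℝ V)
    (h : ∀ w ∈ K, ∀ lam : ℝ, 0 < lam → lam < 1 →
      (m (w - u) : EReal) ≤
        (T (lam • w + (1 - lam) • u) (w - u) : EReal) + φ w - φ u) :
    ∀ w ∈ K, (m (w - u) : EReal) ≤ (T u (w - u) : EReal) + φ w - φ u := by
  intro w hw
  obtain ⟨a, ha⟩ : ∃ a : ℝ, φ u = a :=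
    ⟨(φ u).toReal, ((φ u).coe_toReal (hfin u hu) (hnotbot u)).symm⟩
  obtain ⟨b, hb⟩ : ∃ b : ℝ, φ w = b :=
    ⟨(φ w).toReal, ((φ w).coe_toReal (hfin w hw) (hnotbot w)).symm⟩
  rw [ha, hb, ← EReal.coe_add, ← EReal.coe_sub, EReal.coe_le_coe_iff]
  have hf0 : u + (0:ℝ) • (w - u) = u := by simp
  have hcont : ContinuousWithinAt (fun t : ℝ => T (u + t • (w - u)) (w - u))
      (Set.Icc 0 1) 0 :=
    (hhemi u (w - u) (w - u)).continuousWithinAt (Set.left_mem_Icc.2 zero_le_one)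
  have htend : Filter.Tendsto (fun t : ℝ => T (u + t • (w - u)) (w - u) + (b - a))
      (nhdsWithin 0 (Set.Ioo (0:ℝ) 1)) (nhds (T u (w - u) + (b - a))) := by
    have := hcont.tendsto.mono_left (nhdsWithin_mono _ Set.Ioo_subset_Icc_self)
    rw [hf0] at this
    exact this.add_const (b - a)
  have hne : (nhdsWithin (0:ℝ) (Set.Ioo 0 1)).NeBot := by
    apply mem_closure_iff_nhdsWithin_neBot.mp
    rw [closure_Ioo (zero_ne_one)]
    exact Set.left_mem_Icc.2 zero_le_one
  have hev : ∀ᶠ t in nhdsWithin (0:ℝ) (Set.Ioo 0 1),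
      m (w - u) ≤ T (u + t • (w - u)) (w - u) + (b - a) := by
    filter_upwards [self_mem_nhdsWithin] with t ht
    have key := h w hw t ht.1 ht.2
    rw [ha, hb, ← EReal.coe_add, ← EReal.coe_sub, EReal.coe_le_coe_iff] at key
    have heq : t • w + (1 - t) • u = u + t • (w - u) := by
      rw [smul_sub, sub_smul, one_smul]; abel
    rw [heq] at key
    linarith
  have := ge_of_tendsto htend hev
  linarith
end

section
/- Under the hypotheses of the existence theorem (V reflexive, C bounded closed convex, K Mosco continuous with nonempty closed convex values, T monotone continuous, φ proper convex lsc and continuous on C, m ∈ V*), the solution set Γ = {u ∈ C : u ∈ K(u) and ⟨T(u), v−u⟩ + φ(v) − φ(u) ≥ ⟨m, v−u⟩ for all v ∈ K(u)} is sequentially weakly closed: if uₙ ∈ Γ and uₙ ⇀ u, then u ∈ Γ. -/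
open NormedSpace Filter Topology

/-- A closed convex set is sequentially weakly closed. -/
lemma aux_weak_mem {V : Type*} [NormedAddCommGroup V] [NormedSpace ℝ V]
    {s : Set V} (hc : Convex ℝ s) (hcl : IsClosed s) (x : ℕ → V) (xl : V)
    (hx : ∀ n, x n ∈ s)
    (hconv : ∀ f : StrongDual ℝ V, Tendsto (fun n => f (x n)) atTop (𝓝 (f xl))) :
    xl ∈ s := by
  by_contra h
  obtain ⟨f, c, hfs, hfx⟩ := geometric_hahn_banach_closed_point hc hcl h
  have : f xl ≤ c := le_of_tendsto (hconv f) (Eventually.of_forall fun n => (hfs _ (hx n)).le)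
  linarith

/-- Under the hypotheses of the existence theorem, the solution set
`Γ = {u ∈ C : u ∈ K u ∧ ⟨T u, v - u⟩ + φ v - φ u ≥ ⟨m, v - u⟩ ∀ v ∈ K u}`
is sequentially weakly closed. -/
theorem solution_set_sequentially_weakly_closed
    {V : Type*} [NormedAddCommGroup V] [NormedSpace ℝ V] [CompleteSpace V]
    (hrefl : Function.Surjective (inclusionInDoubleDual ℝ V))
    (C : Set V) (hCne : C.Nonempty) (hCclosed : IsClosed C) (hCconv : Convex ℝ C)
    (hCbdd : Bornology.IsBounded C)
    (K : V → Set V)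
    (hK : ∀ u ∈ C, (K u).Nonempty ∧ IsClosed (K u) ∧ Convex ℝ (K u) ∧ K u ⊆ C)
    (hM1 : ∀ (x : ℕ → V) (xl : V), (∀ n, x n ∈ C) →
      (∀ f : StrongDual ℝ V, Tendsto (fun n => f (x n)) atTop (𝓝 (f xl))) → xl ∈ C →
      ∀ y ∈ K xl, ∃ ys : ℕ → V, (∀ n, ys n ∈ K (x n)) ∧ Tendsto ys atTop (𝓝 y))
    (hM2 : ∀ (x : ℕ → V) (xl : V) (y : ℕ → V) (yl : V), (∀ n, x n ∈ C) →
      (∀ f : StrongDual ℝ V, Tendsto (fun n => f (x n)) atTop (𝓝 (f xl))) →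
      (∀ n, y n ∈ K (x n)) →
      (∀ f : StrongDual ℝ V, Tendsto (fun n => f (y n)) atTop (𝓝 (f yl))) →
      yl ∈ K xl)
    (T : V → StrongDual ℝ V)
    (hmono : ∀ x y : V, 0 ≤ (T x - T y) (x - y))
    (hTcont : Continuous T)
    (φ : V → EReal)
    (hproper : ∃ x, φ x ≠ ⊤) (hnotbot : ∀ x, φ x ≠ ⊥)
    (hconv : ∀ x y : V, ∀ s t : ℝ, 0 ≤ s → 0 ≤ t → s + t = 1 →
      φ (s • x + t • y) ≤ (s : EReal) * φ x + (t : EReal) * φ y)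
    (hlsc : LowerSemicontinuous φ)
    (hφcont : ContinuousOn φ C)
    (hdom : C ⊆ interior {x | φ x ≠ ⊤})
    (m : StrongDual ℝ V)
    (u : ℕ → V) (ul : V)
    (hu : ∀ n, u n ∈ C ∧ u n ∈ K (u n) ∧ ∀ v ∈ K (u n),
      (m (v - u n) : EReal) ≤ (T (u n) (v - u n) : EReal) + φ v - φ (u n))
    (huconv : ∀ f : StrongDual ℝ V, Tendsto (fun n => f (u n)) atTop (𝓝 (f ul))) :
    ul ∈ C ∧ ul ∈ K ul ∧ ∀ v ∈ K ul,
      (m (v - ul) : EReal) ≤ (T ul (v - ul) : EReal) + φ v - φ ul := by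
  have hulC : ul ∈ C := aux_weak_mem hCconv hCclosed u ul (fun n => (hu n).1) huconv
  have hulK : ul ∈ K ul := hM2 u ul u ul (fun n => (hu n).1) huconv (fun n => (hu n).2.1) huconv
  have hfin : ∀ x ∈ C, φ x = ((φ x).toReal : EReal) := fun x hx =>
    (EReal.coe_toReal (interior_subset (hdom hx)) (hnotbot x)).symm
  obtain ⟨M, hM⟩ : ∃ M : ℝ, ∀ x ∈ C, ‖x‖ ≤ M := isBounded_iff_forall_norm_le.1 hCbdd
  -- Minty formulation at the limit point
  have minty : ∀ v ∈ K ul, m (v - ul) ≤ T v (v - ul) + (φ v).toReal - (φ ul).toReal := by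
    intro v hv
    have hvC : v ∈ C := (hK ul hulC).2.2.2 hv
    obtain ⟨ys, hysK, hysl⟩ := hM1 u ul (fun n => (hu n).1) huconv hulC v hv
    have hysC : ∀ n, ys n ∈ C := fun n => (hK (u n) (hu n).1).2.2.2 (hysK n)
    set a : ℕ → ℝ := fun n => m (ys n - u n) with ha_def
    set b : ℕ → ℝ := fun n => T (ys n) (ys n - u n) with hb_def
    set p : ℕ → ℝ := fun n => (φ (u n)).toReal with hp_def
    set q : ℕ → ℝ := fun n => (φ (ys n)).toReal with hq_def
    have key : ∀ n, a n ≤ b n + q n - p n := by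
      intro n
      have h1 := (hu n).2.2 (ys n) (hysK n)
      have h2 : T (u n) (ys n - u n) ≤ b n := by
        have h := hmono (ys n) (u n)
        simp only [ContinuousLinearMap.sub_apply] at h
        simp only [hb_def]
        linarith
      rw [hfin _ (hysC n), hfin _ ((hu n).1)] at h1
      have h4 : ((T (u n)) (ys n - u n) : EReal) + ((q n : ℝ) : EReal) - ((p n : ℝ) : EReal)
          = ((T (u n) (ys n - u n) + q n - p n : ℝ) : EReal) := by
        rw [EReal.coe_sub, EReal.coe_add]
      rw [h4] at h1
      have h5 : m (ys n - u n) ≤ T (u n) (ys n - u n) + q n - p n := EReal.coe_le_coe_iff.1 h1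
      simp only [ha_def]
      linarith
    -- limits of the three sequences
    have ha : Tendsto a atTop (𝓝 (m (v - ul))) := by
      have h1 : Tendsto (fun n => m (ys n)) atTop (𝓝 (m v)) := (m.continuous.tendsto v).comp hysl
      have h2 := huconv m
      have h3 := h1.sub h2
      have heq : ∀ n, a n = m (ys n) - m (u n) := fun n => by
        simp [ha_def, map_sub]
      rw [map_sub]
      exact h3.congr fun n => (heq n).symm
    have hTy : Tendsto (fun n => T (ys n)) atTop (𝓝 (T v)) := (hTcont.tendsto v).comp hysl
    have happly : Continuous fun pp : (V →L[ℝ] ℝ) × V => pp.1 pp.2 :=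
      isBoundedBilinearMap_apply.continuous
    have hb1 : Tendsto (fun n => T (ys n) (ys n)) atTop (𝓝 (T v v)) :=
      (happly.tendsto (T v, v)).comp (hTy.prodMk_nhds hysl)
    have he : Tendsto (fun n => (T (ys n) - T v) (u n)) atTop (𝓝 0) := by
      apply squeeze_zero_norm (a := fun n => ‖T (ys n) - T v‖ * M)
      · intro n
        calc ‖(T (ys n) - T v) (u n)‖ ≤ ‖T (ys n) - T v‖ * ‖u n‖ :=
              (T (ys n) - T v).le_opNorm (u n)
          _ ≤ ‖T (ys n) - T v‖ * M := by
              apply mul_le_mul_of_nonneg_left (hM _ (hu n).1) (norm_nonneg _)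
      · have : Tendsto (fun n => T (ys n) - T v) atTop (𝓝 0) := by
          have h := hTy.sub (tendsto_const_nhds : Tendsto (fun _ : ℕ => T v) atTop (𝓝 (T v)))
          simpa using h
        simpa using (this.norm.mul_const M)
    have hb : Tendsto b atTop (𝓝 (T v (v - ul))) := by
      have h0 : Tendsto (fun n => T (ys n) (ys n) - ((T (ys n) - T v) (u n) + T v (u n)))
          atTop (𝓝 (T v v - (0 + T v ul))) := hb1.sub (he.add (huconv (T v)))
      have heq : ∀ n, b n = T (ys n) (ys n) - ((T (ys n) - T v) (u n) + T v (u n)) := by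
        intro n
        simp only [hb_def, map_sub, ContinuousLinearMap.sub_apply]
        ring
      have heq2 : T v (v - ul) = T v v - (0 + T v ul) := by rw [map_sub]; ring
      rw [heq2]
      exact h0.congr fun n => (heq n).symm
    have hφy : Tendsto (fun n => φ (ys n)) atTop (𝓝 (φ v)) := by
      apply (hφcont v hvC).tendsto.comp
      rw [tendsto_nhdsWithin_iff]
      exact ⟨hysl, Eventually.of_forall hysC⟩
    have hq : Tendsto q atTop (𝓝 ((φ v).toReal)) :=
      (EReal.tendsto_toReal (interior_subset (hdom hvC)) (hnotbot v)).comp hφy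
    -- weak lower semicontinuity via sublevel sets
    set L : ℝ := T v (v - ul) + (φ v).toReal - m (v - ul) with hL_def
    have hlim : Tendsto (fun n => b n + q n - a n) atTop (𝓝 L) := (hb.add hq).sub ha
    have hple : (φ ul).toReal ≤ L := by
      refine le_of_forall_pos_le_add fun ε hε => ?_
      have hev : ∀ᶠ n in atTop, p n ≤ L + ε := by
        filter_upwards [hlim.eventually_le_const (by linarith : L < L + ε)] with n hn
        have := key n
        linarith
      obtain ⟨N, hN⟩ := eventually_atTop.1 hev
      set S : Set V := {x | φ x ≤ ((L + ε : ℝ) : EReal)} with hS_def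
      have hSclosed : IsClosed S := hlsc.isClosed_preimage _
      have hSconv : Convex ℝ S := by
        intro x hx y hy s t hs ht hst
        have h1 := hconv x y s t hs ht hst
        refine h1.trans ?_
        calc (s : EReal) * φ x + (t : EReal) * φ y
            ≤ (s : EReal) * ((L + ε : ℝ) : EReal) + (t : EReal) * ((L + ε : ℝ) : EReal) := by
              apply add_le_add
              · exact mul_le_mul_of_nonneg_left hx (by exact_mod_cast hs)
              · exact mul_le_mul_of_nonneg_left hy (by exact_mod_cast ht)
          _ = ((L + ε : ℝ) : EReal) := by
              rw [← EReal.coe_mul, ← EReal.coe_mul, ← EReal.coe_add, ← add_mul, hst, one_mul]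
      have hmem : ul ∈ S := by
        apply aux_weak_mem hSconv hSclosed (fun n => u (n + N)) ul
        · intro n
          have hk := hN (n + N) (Nat.le_add_left _ _)
          show φ (u (n + N)) ≤ _
          rw [hfin _ (hu (n + N)).1]
          exact_mod_cast hk
        · exact fun f => (huconv f).comp (tendsto_add_atTop_nat N)
      have : φ ul ≤ ((L + ε : ℝ) : EReal) := hmem
      rw [hfin _ hulC] at this
      exact_mod_cast this
    linarith
  refine ⟨hulC, hulK, ?_⟩
  intro v hv
  have hvC : v ∈ C := (hK ul hulC).2.2.2 hv
  set pstar : ℝ := (φ ul).toReal with hpstar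
  set qv : ℝ := (φ v).toReal with hqv
  have main : m (v - ul) ≤ T ul (v - ul) + qv - pstar := by
    set w : ℕ → V := fun n => ul + ((n : ℝ) + 1)⁻¹ • (v - ul) with hw_def
    have ht0 : ∀ n : ℕ, (0 : ℝ) < ((n : ℝ) + 1)⁻¹ := fun n => by positivity
    have ht1 : ∀ n : ℕ, ((n : ℝ) + 1)⁻¹ ≤ 1 := fun n => by
      rw [inv_le_one_iff₀]
      right
      have : (0:ℝ) ≤ (n:ℝ) := Nat.cast_nonneg n
      linarith
    have hwrepr : ∀ n : ℕ, w n = (1 - ((n : ℝ) + 1)⁻¹) • ul + ((n : ℝ) + 1)⁻¹ • v := by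
      intro n
      simp only [hw_def, sub_smul, one_smul, smul_sub]
      abel
    have hwK : ∀ n, w n ∈ K ul := by
      intro n
      rw [hwrepr n]
      exact (hK ul hulC).2.2.1 hulK hv (by linarith [ht1 n]) (le_of_lt (ht0 n)) (by ring)
    have hwC : ∀ n, w n ∈ C := fun n => (hK ul hulC).2.2.2 (hwK n)
    have hineq : ∀ n, m (v - ul) ≤ T (w n) (v - ul) + qv - pstar := by
      intro n
      set t : ℝ := ((n : ℝ) + 1)⁻¹ with ht_def
      have h1 := minty (w n) (hwK n)
      have e1 : w n - ul = t • (v - ul) := by simp [hw_def, ht_def]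
      have e2 : (φ (w n)).toReal ≤ (1 - t) * pstar + t * qv := by
        have hc := hconv ul v (1 - t) t (by linarith [ht1 n]) (le_of_lt (ht0 n)) (by ring)
        rw [hfin _ hulC, hfin _ hvC] at hc
        have hc2 : φ ((1 - t) • ul + t • v) ≤ (((1 - t) * pstar + t * qv : ℝ) : EReal) := by
          refine hc.trans_eq ?_
          rw [EReal.coe_add, EReal.coe_mul, EReal.coe_mul]
        rw [← hwrepr n, hfin _ (hwC n)] at hc2
        exact_mod_cast hc2
      rw [e1, map_smul, map_smul] at h1
      simp only [smul_eq_mul] at h1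
      have h2 : t * m (v - ul) ≤ t * (T (w n) (v - ul) + (qv - pstar)) := by
        rw [mul_add]
        nlinarith [ht0 n]
      have h3 := le_of_mul_le_mul_left h2 (ht0 n)
      linarith
    have htz : Tendsto (fun n : ℕ => ((n : ℝ) + 1)⁻¹) atTop (𝓝 0) := by
      exact tendsto_one_div_add_atTop_nhds_zero_nat.congr fun n => one_div _
    have hwlim : Tendsto w atTop (𝓝 ul) := by
      have h0 : Tendsto (fun n : ℕ => ul + ((n : ℝ) + 1)⁻¹ • (v - ul)) atTop
          (𝓝 (ul + (0 : ℝ) • (v - ul))) := tendsto_const_nhds.add (htz.smul tendsto_const_nhds)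
      simpa using h0
    have hT : Tendsto (fun n => T (w n) (v - ul)) atTop (𝓝 (T ul (v - ul))) := by
      have h0 : Tendsto (fun n => T (w n)) atTop (𝓝 (T ul)) := (hTcont.tendsto ul).comp hwlim
      exact ((ContinuousLinearMap.apply ℝ ℝ (v - ul)).continuous.tendsto (T ul)).comp h0
    exact ge_of_tendsto ((hT.add_const qv).sub_const pstar) (Eventually.of_forall hineq)
  rw [hfin _ hvC, hfin _ hulC]
  calc (m (v - ul) : EReal) ≤ ((T ul (v - ul) + qv - pstar : ℝ) : EReal) :=
        EReal.coe_le_coe_iff.2 main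
    _ = _ := by rw [EReal.coe_sub, EReal.coe_add]
end

section
/- Let V be a reflexive Banach space, K ⊆ V nonempty closed convex with K ∩ C₀ ≠ ∅ for some bounded set C₀, T : V → V* monotone and hemicontinuous, φ : V → ℝ ∪ {+∞} proper convex lsc, and m ∈ V*. Then the set S = {u ∈ K : ⟨T(u), v−u⟩ + φ(v) − φ(u) ≥ ⟨m, v−u⟩ for all v ∈ K} is convex and closed. -/
open NormedSpace

/-- The solution set of the mixed variational inequality on a fixed nonempty closed convex
set `K` (meeting a bounded set `C₀`), with `T` monotone hemicontinuous and `φ` proper convex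
l.s.c., is convex and closed. -/
theorem vi_solution_set_convex_closed
    {V : Type*} [NormedAddCommGroup V] [NormedSpace ℝ V] [CompleteSpace V]
    (hrefl : Function.Surjective (inclusionInDoubleDual ℝ V))
    (K : Set V) (hKne : K.Nonempty) (hKclosed : IsClosed K) (hKconv : Convex ℝ K)
    (C₀ : Set V) (hC₀bdd : Bornology.IsBounded C₀) (hKC₀ : (K ∩ C₀).Nonempty)
    (T : V → StrongDual ℝ V)
    (hmono : ∀ x y : V, 0 ≤ (T x - T y) (x - y))
    (hhemi : ∀ x z w : V, ContinuousOn (fun t : ℝ => T (x + t • z) w) (Set.Icc 0 1))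
    (φ : V → EReal)
    (hproper : ∃ x, φ x ≠ ⊤) (hnotbot : ∀ x, φ x ≠ ⊥)
    (hconv : ∀ x y : V, ∀ s t : ℝ, 0 ≤ s → 0 ≤ t → s + t = 1 →
      φ (s • x + t • y) ≤ (s : EReal) * φ x + (t : EReal) * φ y)
    (hlsc : LowerSemicontinuous φ)
    (m : StrongDual ℝ V) :
    Convex ℝ {u | u ∈ K ∧ ∀ v ∈ K,
        (m (v - u) : EReal) ≤ (T u (v - u) : EReal) + φ v - φ u} ∧
    IsClosed {u | u ∈ K ∧ ∀ v ∈ K,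
        (m (v - u) : EReal) ≤ (T u (v - u) : EReal) + φ v - φ u} := by
  classical
  set S := {u | u ∈ K ∧ ∀ v ∈ K,
      (m (v - u) : EReal) ≤ (T u (v - u) : EReal) + φ v - φ u} with hSdef
  -- solutions have finite φ
  have hStop : ∀ u ∈ S, φ u ≠ ⊤ := by
    rintro u ⟨huK, hu⟩ htop
    have h := hu u huK
    rw [htop] at h
    simp at h
  by_cases hdom : ∃ v ∈ K, φ v ≠ ⊤
  · obtain ⟨v₀, hv₀K, hv₀⟩ := hdom
    set L : V → V → ℝ := fun v u => (T v) u - m u with hLdef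
    set B : V → Set V := fun v =>
      {u | φ u + ((L v u : ℝ) : EReal) ≤ φ v + ((L v v : ℝ) : EReal)} with hBdef
    set D : Set V := {v | v ∈ K ∧ φ v ≠ ⊤} with hDdef
    have hSeq : S = K ∩ ⋂ v ∈ D, B v := by
      ext u
      constructor
      · intro hu
        obtain ⟨huK, hcond⟩ := hu
        have hru : φ u = ((φ u).toReal : ℝ) :=
          (EReal.coe_toReal (hStop u ⟨huK, hcond⟩) (hnotbot u)).symm
        set r : ℝ := (φ u).toReal
        refine ⟨huK, Set.mem_iInter₂.2 fun v hv => ?_⟩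
        obtain ⟨hvK, hvtop⟩ := hv
        have hrv : φ v = ((φ v).toReal : ℝ) := (EReal.coe_toReal hvtop (hnotbot v)).symm
        set s : ℝ := (φ v).toReal
        have h1 := hcond v hvK
        rw [hru, hrv] at h1
        have h1' : m (v - u) ≤ T u (v - u) + s - r := by
          rw [show (T u (v - u) : EReal) + ((s : ℝ) : EReal) - ((r : ℝ) : EReal)
              = ((T u (v - u) + s - r : ℝ) : EReal) from by push_cast; ring] at h1
          exact EReal.coe_le_coe_iff.1 h1
        have h2 : T u (v - u) ≤ T v (v - u) := by
          have := hmono v u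
          rw [ContinuousLinearMap.sub_apply] at this
          linarith
        show φ u + ((L v u : ℝ) : EReal) ≤ φ v + ((L v v : ℝ) : EReal)
        rw [hru, hrv]
        have hms : m (v - u) = m v - m u := map_sub m v u
        have hts : T v (v - u) = T v v - T v u := map_sub (T v) v u
        have hms2 : m (v - u) = m v - m u := map_sub m v u
        have : r + L v u ≤ s + L v v := by
          simp only [hLdef]
          linarith [h1', h2, hms2, hts]
        exact_mod_cast this
      · rintro ⟨huK, hB⟩
        have hB' : ∀ v ∈ D, u ∈ B v := Set.mem_iInter₂.1 hB
        -- φ u is finite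
        have hutop : φ u ≠ ⊤ := by
          intro htop
          have h := hB' v₀ ⟨hv₀K, hv₀⟩
          have hrv : φ v₀ = ((φ v₀).toReal : ℝ) := (EReal.coe_toReal hv₀ (hnotbot v₀)).symm
          simp only [hBdef, Set.mem_setOf_eq] at h
          rw [htop, hrv] at h
          rw [show (⊤ : EReal) + ((L v₀ u : ℝ) : EReal) = ⊤ by simp,
            show (((φ v₀).toReal : ℝ) : EReal) + ((L v₀ v₀ : ℝ) : EReal)
              = (((φ v₀).toReal + L v₀ v₀ : ℝ) : EReal) by push_cast; ring] at h
          exact (EReal.coe_ne_top _) (top_le_iff.1 h)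
        have hru : φ u = ((φ u).toReal : ℝ) := (EReal.coe_toReal hutop (hnotbot u)).symm
        set r : ℝ := (φ u).toReal
        refine ⟨huK, fun v hvK => ?_⟩
        by_cases hvtop : φ v = ⊤
        · rw [hvtop, hru]
          rw [show (T u (v - u) : EReal) + ⊤ - ((r : ℝ) : EReal) = ⊤ by
            rw [EReal.coe_add_top, EReal.top_sub_coe]]
          exact le_top
        · have hrv : φ v = ((φ v).toReal : ℝ) := (EReal.coe_toReal hvtop (hnotbot v)).symm
          set s : ℝ := (φ v).toReal
          -- key pointwise estimate for t ∈ (0,1]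
          have key : ∀ t ∈ Set.Ioc (0:ℝ) 1,
              m (v - u) ≤ T (u + t • (v - u)) (v - u) + s - r := by
            intro t ht
            set w : V := u + t • (v - u) with hw
            have hwK : w ∈ K := by
              have : (1 - t) • u + t • v = w := by rw [hw]; module
              rw [← this]
              exact hKconv huK hvK (by linarith [ht.2]) (le_of_lt ht.1) (by ring)
            have hφw : φ w ≤ (((1 - t) * r + t * s : ℝ) : EReal) := by
              have h := hconv u v (1 - t) t (by linarith [ht.2]) (le_of_lt ht.1) (by ring)
              rw [show (1 - t) • u + t • v = w by rw [hw]; module] at h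
              rw [hru, hrv] at h
              calc φ w ≤ ((1 - t : ℝ) : EReal) * ((r : ℝ) : EReal)
                    + ((t : ℝ) : EReal) * ((s : ℝ) : EReal) := h
                _ = (((1 - t) * r + t * s : ℝ) : EReal) := by push_cast; ring
            have hwtop : φ w ≠ ⊤ := fun h => by
              rw [h] at hφw; exact (EReal.coe_ne_top _) (top_le_iff.1 hφw)
            have hrw : φ w = ((φ w).toReal : ℝ) := (EReal.coe_toReal hwtop (hnotbot w)).symm
            set q : ℝ := (φ w).toReal
            have hq : q ≤ (1 - t) * r + t * s := by
              rw [hrw] at hφw; exact_mod_cast hφw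
            have hBw := hB' w ⟨hwK, hwtop⟩
            simp only [hBdef, Set.mem_setOf_eq] at hBw
            rw [hru, hrw] at hBw
            have hBw' : r + L w u ≤ q + L w w := by
              have : ((r + L w u : ℝ) : EReal) ≤ ((q + L w w : ℝ) : EReal) := by
                push_cast; exact hBw
              exact_mod_cast this
            have hTw : T w w = T w u + t * T w (v - u) := by
              rw [hw]
              rw [map_add, map_smul]
              simp [smul_eq_mul]
            have hmw : m w = m u + t * m (v - u) := by
              rw [hw, map_add, map_smul]
              simp [smul_eq_mul]
            have hLL : L w w = L w u + t * (T w (v - u) - m (v - u)) := by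
              simp only [hLdef]
              rw [hTw, hmw]; ring
            have h3 : t * m (v - u) ≤ t * (T w (v - u) + s - r) := by
              rw [hLL] at hBw'
              nlinarith [hq, hBw', ht.1.le]
            have := (mul_le_mul_iff_right₀ ht.1).1 h3
            linarith
          -- pass to the limit t → 0⁺
          have hreal : m (v - u) ≤ T u (v - u) + s - r := by
            have hf := hhemi u (v - u) (v - u)
            have hcw : ContinuousWithinAt (fun t : ℝ => T (u + t • (v - u)) (v - u))
                (Set.Ioc (0:ℝ) 1) 0 :=
              (hf 0 ⟨le_rfl, zero_le_one⟩).mono Set.Ioc_subset_Icc_self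
            have hne : (nhdsWithin (0:ℝ) (Set.Ioc (0:ℝ) 1)).NeBot :=
              left_nhdsWithin_Ioc_neBot zero_lt_one
            have hzero : (fun t : ℝ => T (u + t • (v - u)) (v - u)) 0 = T u (v - u) := by
              simp
            have hT0 : m (v - u) - s + r ≤ T u (v - u) := by
              rw [← hzero]
              refine ge_of_tendsto hcw ?_
              filter_upwards [self_mem_nhdsWithin] with t ht
              linarith [key t ht]
            linarith
          rw [hru, hrv]
          have : ((m (v - u) : ℝ) : EReal) ≤ ((T u (v - u) + s - r : ℝ) : EReal) := by
            exact_mod_cast hreal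
          calc ((m (v - u) : ℝ) : EReal) ≤ ((T u (v - u) + s - r : ℝ) : EReal) := this
            _ = (T u (v - u) : EReal) + ((s : ℝ) : EReal) - ((r : ℝ) : EReal) := by
              push_cast; ring
    -- each B v (for v ∈ D) is closed and convex
    have hBconv : ∀ v ∈ D, Convex ℝ (B v) := by
      rintro v ⟨hvK, hvtop⟩
      have hrv : φ v = ((φ v).toReal : ℝ) := (EReal.coe_toReal hvtop (hnotbot v)).symm
      set s : ℝ := (φ v).toReal
      intro u₁ h₁ u₂ h₂ a b ha hb hab
      simp only [hBdef, Set.mem_setOf_eq] at h₁ h₂ ⊢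
      rw [hrv] at h₁ h₂ ⊢
      -- members have finite φ
      have hfin : ∀ u : V, φ u + ((L v u : ℝ) : EReal) ≤ ((s : ℝ) : EReal) + ((L v v : ℝ) : EReal)
          → φ u ≠ ⊤ := by
        intro u h htop
        rw [htop, show (⊤ : EReal) + ((L v u : ℝ) : EReal) = ⊤ by simp] at h
        rw [show ((s : ℝ) : EReal) + ((L v v : ℝ) : EReal) = ((s + L v v : ℝ) : EReal) by
          push_cast; ring] at h
        exact (EReal.coe_ne_top _) (top_le_iff.1 h)
      have h₁t := hfin u₁ h₁
      have h₂t := hfin u₂ h₂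
      have hr₁ : φ u₁ = ((φ u₁).toReal : ℝ) := (EReal.coe_toReal h₁t (hnotbot u₁)).symm
      have hr₂ : φ u₂ = ((φ u₂).toReal : ℝ) := (EReal.coe_toReal h₂t (hnotbot u₂)).symm
      set r₁ : ℝ := (φ u₁).toReal
      set r₂ : ℝ := (φ u₂).toReal
      have h₁' : r₁ + L v u₁ ≤ s + L v v := by
        rw [hr₁] at h₁
        have : ((r₁ + L v u₁ : ℝ) : EReal) ≤ ((s + L v v : ℝ) : EReal) := by
          push_cast; exact h₁
        exact_mod_cast this
      have h₂' : r₂ + L v u₂ ≤ s + L v v := by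
        rw [hr₂] at h₂
        have : ((r₂ + L v u₂ : ℝ) : EReal) ≤ ((s + L v v : ℝ) : EReal) := by
          push_cast; exact h₂
        exact_mod_cast this
      have hLc : L v (a • u₁ + b • u₂) = a * L v u₁ + b * L v u₂ := by
        simp only [hLdef]
        rw [map_add, map_add, map_smul, map_smul, map_smul, map_smul]
        simp [smul_eq_mul]; ring
      have hφc : φ (a • u₁ + b • u₂) ≤ ((a * r₁ + b * r₂ : ℝ) : EReal) := by
        have h := hconv u₁ u₂ a b ha hb hab
        rw [hr₁, hr₂] at h
        calc φ (a • u₁ + b • u₂) ≤ ((a : ℝ) : EReal) * ((r₁ : ℝ) : EReal)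
              + ((b : ℝ) : EReal) * ((r₂ : ℝ) : EReal) := h
          _ = ((a * r₁ + b * r₂ : ℝ) : EReal) := by push_cast; ring
      calc φ (a • u₁ + b • u₂) + ((L v (a • u₁ + b • u₂) : ℝ) : EReal)
          ≤ ((a * r₁ + b * r₂ : ℝ) : EReal) + ((L v (a • u₁ + b • u₂) : ℝ) : EReal) :=
            add_le_add_left hφc _
        _ = ((a * r₁ + b * r₂ + L v (a • u₁ + b • u₂) : ℝ) : EReal) := by push_cast; ring
        _ ≤ ((s + L v v : ℝ) : EReal) := by
            rw [EReal.coe_le_coe_iff, hLc]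
            have p1 := mul_le_mul_of_nonneg_left h₁' ha
            have p2 := mul_le_mul_of_nonneg_left h₂' hb
            have hsum : a * (s + L v v) + b * (s + L v v) = s + L v v := by
              rw [← add_mul, hab, one_mul]
            nlinarith [p1, p2, hsum]
        _ = ((s : ℝ) : EReal) + ((L v v : ℝ) : EReal) := by push_cast; ring
    have hBclosed : ∀ v : V, IsClosed (B v) := by
      intro v
      have hgc : Continuous fun u : V => ((L v u : ℝ) : EReal) := by
        apply continuous_coe_real_ereal.comp
        exact (T v - m).continuous
      have hψ : LowerSemicontinuous fun u : V => φ u + ((L v u : ℝ) : EReal) := by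
        apply hlsc.add' hgc.lowerSemicontinuous
        intro x
        exact EReal.continuousAt_add (Or.inr (EReal.coe_ne_bot _)) (Or.inr (EReal.coe_ne_top _))
      exact hψ.isClosed_preimage (φ v + ((L v v : ℝ) : EReal))
    rw [hSeq]
    constructor
    · exact hKconv.inter (convex_iInter fun v => convex_iInter fun hv => hBconv v hv)
    · exact hKclosed.inter (isClosed_iInter fun v => isClosed_iInter fun _ => hBclosed v)
  · -- φ ≡ ⊤ on K : the solution set is empty
    push_neg at hdom
    have hSempty : S = ∅ := by
      ext u
      simp only [Set.mem_empty_iff_false, iff_false]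
      intro hu
      exact hStop u hu (hdom u hu.1)
    rw [hSempty]
    exact ⟨convex_empty, isClosed_empty⟩
end
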